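/- arXiv:1501.01891 — 4 statements merged into one kernel-verified Lean document; each statement's English description precedes it below -/
import Mathlib

section
/- If a triangle ABC is inscribed in a circle and P is any point on that circle, then the feet of the perpendiculars from P to the three (extended) sides AB, BC, CA are collinear. -/
open EuclideanSpace Real

private lemma sw_collinear_of_det (p q r : EuclideanSpace ℝ (Fin 2))
    (h : (q 0 - p 0) * (r 1 - p 1) - (q 1 - p 1) * (r 0 - p 0) = 0) :
    Collinear ℝ ({p, q, r} : Set (EuclideanSpace ℝ (Fin 2))) := by
  by_cases hq : q = p
  · rw [hq, Set.insert_comm, Set.insert_eq_self.2 (by simp)]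
    exact collinear_pair ℝ _ _
  · have hq' : q 0 - p 0 ≠ 0 ∨ q 1 - p 1 ≠ 0 := by
      by_contra hc
      push_neg at hc
      exact hq (by ext i; fin_cases i <;> simp <;> linarith [hc.1, hc.2])
    rw [collinear_iff_of_mem (Set.mem_insert p _)]
    refine ⟨q - p, fun x hx => ?_⟩
    have key : ∀ s : ℝ, x 0 - p 0 = s * (q 0 - p 0) → x 1 - p 1 = s * (q 1 - p 1) →
        ∃ t : ℝ, x = t • (q - p) +ᵥ p := by
      intro s h0 h1
      refine ⟨s, ?_⟩
      ext i; fin_cases i <;>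
        simp [PiLp.sub_apply, PiLp.smul_apply, smul_eq_mul] <;> linarith
    rcases hx with rfl | rfl | rfl
    · exact ⟨0, by simp⟩
    · exact ⟨1, by ext i; fin_cases i <;> simp⟩
    · rcases hq' with h0 | h0
      · refine key ((x 0 - p 0)/(q 0 - p 0)) (by field_simp) ?_
        field_simp
        linear_combination h
      · refine key ((x 1 - p 1)/(q 1 - p 1)) ?_ (by field_simp)
        field_simp
        linear_combination -h

private lemma sw_circle_eq (O X Y : EuclideanSpace ℝ (Fin 2)) (r : ℝ)
    (hX : dist O X = r) (hY : dist O Y = r) :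
    (O 0 - X 0)^2 + (O 1 - X 1)^2 = (O 0 - Y 0)^2 + (O 1 - Y 1)^2 := by
  have h : dist O X ^ 2 = dist O Y ^ 2 := by rw [hX, hY]
  rw [EuclideanSpace.dist_eq, EuclideanSpace.dist_eq, Real.sq_sqrt (by positivity),
    Real.sq_sqrt (by positivity), Fin.sum_univ_two, Fin.sum_univ_two] at h
  simpa [Real.dist_eq, sq_abs] using h

private lemma sw_foot_eq (P A B F : EuclideanSpace ℝ (Fin 2)) (t : ℝ) (hF : F = A + t • (B - A))
    (hp : inner ℝ (P - F) (B - A) = (0:ℝ)) :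
    (P 0 - A 0 - t*(B 0 - A 0))*(B 0 - A 0) + (P 1 - A 1 - t*(B 1 - A 1))*(B 1 - A 1) = 0 := by
  rw [hF] at hp
  simp only [PiLp.inner_apply, Fin.sum_univ_two, RCLike.inner_apply, conj_trivial,
    PiLp.add_apply, PiLp.sub_apply, PiLp.smul_apply, smul_eq_mul] at hp
  linear_combination hp

set_option maxHeartbeats 40000000 in
private lemma sw_key (a0 b0 b1 c0 c1 o0 o1 t1 t2 t3 : ℝ)
    (hd1 : (b0 - a0)^2 + b1^2 ≠ 0)
    (hd2 : (c0 - b0)^2 + (c1 - b1)^2 ≠ 0)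
    (hd3 : (a0 - c0)^2 + c1^2 ≠ 0)
    (h1 : (-a0 - t1*(b0 - a0))*(b0 - a0) + (-(t1*b1))*b1 = 0)
    (h2 : (-b0 - t2*(c0 - b0))*(c0 - b0) + (-b1 - t2*(c1 - b1))*(c1 - b1) = 0)
    (h3 : (-c0 - t3*(a0 - c0))*(a0 - c0) + (-c1 + t3*c1)*(-c1) = 0)
    (hQA : (o0 - a0)^2 + o1^2 = o0^2 + o1^2)
    (hQB : (o0 - b0)^2 + (o1 - b1)^2 = o0^2 + o1^2)
    (hQC : (o0 - c0)^2 + (o1 - c1)^2 = o0^2 + o1^2) :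
    ((b0 + t2*(c0 - b0)) - (a0 + t1*(b0 - a0))) * ((c1 - t3*c1) - t1*b1) -
      ((b1 + t2*(c1 - b1)) - t1*b1) * ((c0 + t3*(a0 - c0)) - (a0 + t1*(b0 - a0))) = 0 := by
  have key : (((b0 - a0)^2 + b1^2) * ((c0 - b0)^2 + (c1 - b1)^2) * ((a0 - c0)^2 + c1^2)) *
      (((b0 + t2*(c0 - b0)) - (a0 + t1*(b0 - a0))) * ((c1 - t3*c1) - t1*b1) -
        ((b1 + t2*(c1 - b1)) - t1*b1) * ((c0 + t3*(a0 - c0)) - (a0 + t1*(b0 - a0)))) = 0 := by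
    linear_combination (((((((((((-1)*t2*a0^3*b0^2*b1 + 1*t2*a0^3*b0^2*c1) + (2*t2*a0^3*b0*b1*c0 + ((-2)*t2*a0^3*b0*c0*c1 + (-1)*t2*a0^3*b1^3))) + ((3*t2*a0^3*b1^2*c1 + ((-1)*t2*a0^3*b1*c0^2 + (-3)*t2*a0^3*b1*c1^2)) + (1*t2*a0^3*c0^2*c1 + (1*t2*a0^3*c1^3 + (-1)*t2*a0^2*b0^3*c1)))) + (((3*t2*a0^2*b0^2*b1*c0 + (-1)*t2*a0^2*b0*b1^2*c1) + ((-6)*t2*a0^2*b0*b1*c0^2 + (2*t2*a0^2*b0*b1*c1^2 + 3*t2*a0^2*b0*c0^2*c1))) + (((-1)*t2*a0^2*b0*c1^3 + (3*t2*a0^2*b1^3*c0 + (-8)*t2*a0^2*b1^2*c0*c1)) + (3*t2*a0^2*b1*c0^3 + (7*t2*a0^2*b1*c0*c1^2 + (-2)*t2*a0^2*c0^3*c1))))) + (((((-2)*t2*a0^2*c0*c1^3 + 2*t2*a0*b0^3*c0*c1) + ((-3)*t2*a0*b0^2*b1*c0^2 + ((-1)*t2*a0*b0^2*b1*c1^2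 + (-3)*t2*a0*b0^2*c0^2*c1))) + ((1*t2*a0*b0^2*c1^3 + (2*t2*a0*b0*b1^2*c0*c1 + 6*t2*a0*b0*b1*c0^3)) + ((-2)*t2*a0*b0*b1*c0*c1^2 + ((-3)*t2*a0*b1^3*c0^2 + (-1)*t2*a0*b1^3*c1^2)))) + (((7*t2*a0*b1^2*c0^2*c1 + (3*t2*a0*b1^2*c1^3 + (-3)*t2*a0*b1*c0^4)) + ((-6)*t2*a0*b1*c0^2*c1^2 + ((-3)*t2*a0*b1*c1^4 + 1*t2*a0*c0^4*c1))) + ((2*t2*a0*c0^2*c1^3 + (1*t2*a0*c1^5 + (-1)*t2*b0^3*c0^2*c1)) + ((-1)*t2*b0^3*c1^3 + (1*t2*b0^2*b1*c0^3 + 1*t2*b0^2*b1*c0*c1^2)))))) + (((((2*t2*b0^2*c0^3*c1 + 2*t2*b0^2*c0*c1^3) + ((-1)*t2*b0*b1^2*c0^2*c1 + ((-1)*t2*b0*b1^2*c1^3 + (-2)*t2*b0*b1*c0^4))) + ((2*t2*b0*b1*c1^4 + ((-1)*t2*b0*c0^4*c1 + (-2)*t2*b0*c0^2*c1^3)) +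 ((-1)*t2*b0*c1^5 + (1*t2*b1^3*c0^3 + 1*t2*b1^3*c0*c1^2)))) + ((((-2)*t2*b1^2*c0^3*c1 + ((-2)*t2*b1^2*c0*c1^3 + 1*t2*b1*c0^5)) + (2*t2*b1*c0^3*c1^2 + (1*t2*b1*c0*c1^4 + (-1)*t3*a0^3*b0^2*b1))) + ((1*t3*a0^3*b0^2*c1 + (2*t3*a0^3*b0*b1*c0 + (-2)*t3*a0^3*b0*c0*c1)) + ((-1)*t3*a0^3*b1^3 + (3*t3*a0^3*b1^2*c1 + (-1)*t3*a0^3*b1*c0^2))))) + (((((-3)*t3*a0^3*b1*c1^2 + 1*t3*a0^3*c0^2*c1) + (1*t3*a0^3*c1^3 + ((-1)*t3*a0^2*b0^3*c1 + 3*t3*a0^2*b0^2*b1*c0))) + (((-1)*t3*a0^2*b0*b1^2*c1 + ((-6)*t3*a0^2*b0*b1*c0^2 + 2*t3*a0^2*b0*b1*c1^2)) + (3*t3*a0^2*b0*c0^2*c1 + ((-1)*t3*a0^2*b0*c1^3 + 3*t3*a0^2*b1^3*c0)))) + ((((-8)*t3*a0^2*b1^2*c0*c1 + (3*t3*a0^2*b1*c0^3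 + 7*t3*a0^2*b1*c0*c1^2)) + ((-2)*t3*a0^2*c0^3*c1 + ((-2)*t3*a0^2*c0*c1^3 + 2*t3*a0*b0^3*c0*c1))) + (((-3)*t3*a0*b0^2*b1*c0^2 + ((-1)*t3*a0*b0^2*b1*c1^2 + (-3)*t3*a0*b0^2*c0^2*c1)) + (1*t3*a0*b0^2*c1^3 + (2*t3*a0*b0*b1^2*c0*c1 + 6*t3*a0*b0*b1*c0^3))))))) + (((((((-2)*t3*a0*b0*b1*c0*c1^2 + (-3)*t3*a0*b1^3*c0^2) + ((-1)*t3*a0*b1^3*c1^2 + (7*t3*a0*b1^2*c0^2*c1 + 3*t3*a0*b1^2*c1^3))) + (((-3)*t3*a0*b1*c0^4 + ((-6)*t3*a0*b1*c0^2*c1^2 + (-3)*t3*a0*b1*c1^4)) + (1*t3*a0*c0^4*c1 + (2*t3*a0*c0^2*c1^3 + 1*t3*a0*c1^5)))) + ((((-1)*t3*b0^3*c0^2*c1 + ((-1)*t3*b0^3*c1^3 + 1*t3*b0^2*b1*c0^3)) + (1*t3*b0^2*b1*c0*c1^2 + (2*t3*b0^2*c0^3*c1 + 2*t3*b0^2*c0*c1^3)))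 + (((-1)*t3*b0*b1^2*c0^2*c1 + ((-1)*t3*b0*b1^2*c1^3 + (-2)*t3*b0*b1*c0^4)) + (2*t3*b0*b1*c1^4 + ((-1)*t3*b0*c0^4*c1 + (-2)*t3*b0*c0^2*c1^3))))) + (((((-1)*t3*b0*c1^5 + 1*t3*b1^3*c0^3) + (1*t3*b1^3*c0*c1^2 + ((-2)*t3*b1^2*c0^3*c1 + (-2)*t3*b1^2*c0*c1^3))) + ((1*t3*b1*c0^5 + (2*t3*b1*c0^3*c1^2 + 1*t3*b1*c0*c1^4)) + (1*a0^3*b0^2*b1 + ((-1)*a0^3*b0^2*c1 + (-2)*a0^3*b0*b1*c0)))) + (((2*a0^3*b0*c0*c1 + (1*a0^3*b1^3 + (-3)*a0^3*b1^2*c1)) + (1*a0^3*b1*c0^2 + (3*a0^3*b1*c1^2 + (-1)*a0^3*c0^2*c1))) + (((-1)*a0^3*c1^3 + (1*a0^2*b0^3*c1 + (-3)*a0^2*b0^2*b1*c0)) + (1*a0^2*b0*b1^2*c1 + (6*a0^2*b0*b1*c0^2 + (-2)*a0^2*b0*b1*c1^2)))))) + ((((((-3)*a0^2*b0*c0^2*c1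 + 1*a0^2*b0*c1^3) + ((-3)*a0^2*b1^3*c0 + (8*a0^2*b1^2*c0*c1 + (-3)*a0^2*b1*c0^3))) + (((-7)*a0^2*b1*c0*c1^2 + (2*a0^2*c0^3*c1 + 2*a0^2*c0*c1^3)) + ((-2)*a0*b0^3*c0*c1 + (3*a0*b0^2*b1*c0^2 + 1*a0*b0^2*b1*c1^2)))) + (((3*a0*b0^2*c0^2*c1 + ((-1)*a0*b0^2*c1^3 + (-2)*a0*b0*b1^2*c0*c1)) + ((-6)*a0*b0*b1*c0^3 + (2*a0*b0*b1*c0*c1^2 + 3*a0*b1^3*c0^2))) + ((1*a0*b1^3*c1^2 + ((-7)*a0*b1^2*c0^2*c1 + (-3)*a0*b1^2*c1^3)) + (3*a0*b1*c0^4 + (6*a0*b1*c0^2*c1^2 + 3*a0*b1*c1^4))))) + (((((-1)*a0*c0^4*c1 + (-2)*a0*c0^2*c1^3) + ((-1)*a0*c1^5 + (1*b0^3*c0^2*c1 + 1*b0^3*c1^3))) + (((-1)*b0^2*b1*c0^3 + ((-1)*b0^2*b1*c0*c1^2 + (-2)*b0^2*c0^3*c1)) + ((-2)*b0^2*c0*c1^3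 + (1*b0*b1^2*c0^2*c1 + 1*b0*b1^2*c1^3)))) + (((2*b0*b1*c0^4 + ((-2)*b0*b1*c1^4 + 1*b0*c0^4*c1)) + (2*b0*c0^2*c1^3 + (1*b0*c1^5 + (-1)*b1^3*c0^3))) + (((-1)*b1^3*c0*c1^2 + (2*b1^2*c0^3*c1 + 2*b1^2*c0*c1^3)) + ((-1)*b1*c0^5 + ((-2)*b1*c0^3*c1^2 + (-1)*b1*c0*c1^4))))))))) * h1 + (((((((((-1)*t3*a0^5*b1 + 1*t3*a0^5*c1) + (2*t3*a0^4*b0*b1 + ((-3)*t3*a0^4*b0*c1 + 3*t3*a0^4*b1*c0))) + (((-2)*t3*a0^4*c0*c1 + (-1)*t3*a0^3*b0^2*b1) + (3*t3*a0^3*b0^2*c1 + ((-6)*t3*a0^3*b0*b1*c0 + 6*t3*a0^3*b0*c0*c1)))) + ((((-1)*t3*a0^3*b1^3 + 1*t3*a0^3*b1^2*c1) + ((-3)*t3*a0^3*b1*c0^2 + ((-1)*t3*a0^3*b1*c1^2 + 1*t3*a0^3*c0^2*c1))) + ((1*t3*a0^3*c1^3 + ((-1)*t3*a0^2*b0^3*c1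 + 3*t3*a0^2*b0^2*b1*c0)) + ((-6)*t3*a0^2*b0^2*c0*c1 + ((-1)*t3*a0^2*b0*b1^2*c1 + 6*t3*a0^2*b0*b1*c0^2))))) + ((((2*t3*a0^2*b0*b1*c1^2 + (-3)*t3*a0^2*b0*c0^2*c1) + ((-3)*t3*a0^2*b0*c1^3 + (3*t3*a0^2*b1^3*c0 + (-2)*t3*a0^2*b1^2*c0*c1))) + ((1*t3*a0^2*b1*c0^3 + (1*t3*a0^2*b1*c0*c1^2 + 2*t3*a0*b0^3*c0*c1)) + ((-3)*t3*a0*b0^2*b1*c0^2 + ((-1)*t3*a0*b0^2*b1*c1^2 + 3*t3*a0*b0^2*c0^2*c1)))) + (((3*t3*a0*b0^2*c1^3 + 2*t3*a0*b0*b1^2*c0*c1) + ((-2)*t3*a0*b0*b1*c0^3 + ((-2)*t3*a0*b0*b1*c0*c1^2 + (-3)*t3*a0*b1^3*c0^2))) + (((-1)*t3*a0*b1^3*c1^2 + (1*t3*a0*b1^2*c0^2*c1 + 1*t3*a0*b1^2*c1^3)) + ((-1)*t3*b0^3*c0^2*c1 + ((-1)*t3*b0^3*c1^3 + 1*t3*b0^2*b1*c0^3))))))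 + (((((1*t3*b0^2*b1*c0*c1^2 + (-1)*t3*b0*b1^2*c0^2*c1) + ((-1)*t3*b0*b1^2*c1^3 + (1*t3*b1^3*c0^3 + 1*t3*b1^3*c0*c1^2))) + (((-1)*a0^4*b0*b1 + 1*a0^4*b0*c1) + (1*a0^3*b0^2*b1 + ((-2)*a0^3*b0^2*c1 + 3*a0^3*b0*b1*c0)))) + ((((-2)*a0^3*b0*c0*c1 + 1*a0^3*b1^3) + ((-1)*a0^3*b1^2*c1 + (1*a0^2*b0^3*c1 + (-3)*a0^2*b0^2*b1*c0))) + ((4*a0^2*b0^2*c0*c1 + (1*a0^2*b0*b1^2*c1 + (-3)*a0^2*b0*b1*c0^2)) + ((-1)*a0^2*b0*b1*c1^2 + (1*a0^2*b0*c0^2*c1 + 1*a0^2*b0*c1^3))))) + (((((-3)*a0^2*b1^3*c0 + 2*a0^2*b1^2*c0*c1) + ((-2)*a0*b0^3*c0*c1 + (3*a0*b0^2*b1*c0^2 + 1*a0*b0^2*b1*c1^2))) + (((-2)*a0*b0^2*c0^2*c1 + ((-2)*a0*b0^2*c1^3 + (-2)*a0*b0*b1^2*c0*c1)) + (1*a0*b0*b1*c0^3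 + (1*a0*b0*b1*c0*c1^2 + 3*a0*b1^3*c0^2)))) + (((1*a0*b1^3*c1^2 + (-1)*a0*b1^2*c0^2*c1) + ((-1)*a0*b1^2*c1^3 + (1*b0^3*c0^2*c1 + 1*b0^3*c1^3))) + (((-1)*b0^2*b1*c0^3 + ((-1)*b0^2*b1*c0*c1^2 + 1*b0*b1^2*c0^2*c1)) + (1*b0*b1^2*c1^3 + ((-1)*b1^3*c0^3 + (-1)*b1^3*c0*c1^2)))))))) * h2 + (((((((-1)*a0^3*b0^2*b1 + (1*a0^3*b0^2*c1 + 1*a0^3*b0*b1*c0)) + ((-1)*a0^3*b0*c0*c1 + ((-1)*a0^3*b1^3 + 2*a0^3*b1^2*c1))) + (((-1)*a0^3*b1*c1^2 + (1*a0^2*b0^3*b1 + (-2)*a0^2*b0^3*c1)) + (1*a0^2*b0^2*b1*c0 + (1*a0^2*b0^2*c0*c1 + 1*a0^2*b0*b1^3)))) + ((((-2)*a0^2*b0*b1^2*c1 + ((-2)*a0^2*b0*b1*c0^2 + 1*a0^2*b0*c0^2*c1)) + (1*a0^2*b0*c1^3 + (1*a0^2*b1^3*c0 + (-1)*a0^2*b1^2*c0*c1)))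 + ((1*a0*b0^4*c1 + ((-2)*a0*b0^3*b1*c0 + 1*a0*b0^3*c0*c1)) + (1*a0*b0^2*b1*c0^2 + (2*a0*b0^2*b1*c1^2 + (-2)*a0*b0^2*c0^2*c1))))) + (((((-2)*a0*b0^2*c1^3 + ((-2)*a0*b0*b1^3*c0 + 1*a0*b0*b1^2*c0*c1)) + (1*a0*b0*b1*c0^3 + (1*a0*b0*b1*c0*c1^2 + (-1)*a0*b1^4*c1))) + ((1*a0*b1^3*c0^2 + (2*a0*b1^3*c1^2 + (-1)*a0*b1^2*c0^2*c1)) + ((-1)*a0*b1^2*c1^3 + ((-1)*b0^4*c0*c1 + 1*b0^3*b1*c0^2)))) + ((((-1)*b0^3*b1*c1^2 + (1*b0^3*c0^2*c1 + 1*b0^3*c1^3)) + ((-1)*b0^2*b1*c0^3 + ((-1)*b0^2*b1*c0*c1^2 + 1*b0*b1^3*c0^2))) + (((-1)*b0*b1^3*c1^2 + (1*b0*b1^2*c0^2*c1 + 1*b0*b1^2*c1^3)) + (1*b1^4*c0*c1 + ((-1)*b1^3*c0^3 + (-1)*b1^3*c0*c1^2))))))) * h3)) + (((((((1*a0^2*b0*b1^2*c1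 + ((-2)*a0^2*b0*b1*c1^2 + 1*a0^2*b0*c1^3)) + (((-1)*a0^2*b1^3*c0 + 2*a0^2*b1^2*c0*c1) + ((-1)*a0^2*b1*c0*c1^2 + (-1)*a0*b0^2*b1^2*c1))) + ((4*a0*b0^2*b1*c1^2 + ((-3)*a0*b0^2*c1^3 + (-4)*a0*b0*b1^2*c0*c1)) + ((2*a0*b0*b1^2*c1*o0 + 4*a0*b0*b1*c0*c1^2) + ((-4)*a0*b0*b1*c1^2*o0 + 2*a0*b0*c1^3*o0)))) + ((((-1)*a0*b1^4*c1 + (3*a0*b1^3*c0^2 + (-2)*a0*b1^3*c0*o0)) + ((3*a0*b1^3*c1^2 + (-4)*a0*b1^2*c0^2*c1) + (4*a0*b1^2*c0*c1*o0 + (-3)*a0*b1^2*c1^3))) + ((1*a0*b1*c0^2*c1^2 + ((-2)*a0*b1*c0*c1^2*o0 + 1*a0*b1*c1^4)) + (((-2)*b0^3*b1*c1^2 + 3*b0^3*c1^3) + (2*b0^2*b1^2*c0*c1 + (-2)*b0^2*b1^2*c1*o0))))) + (((((-5)*b0^2*b1*c0*c1^2 + (8*b0^2*b1*c1^2*o0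 + (-6)*b0^2*c1^3*o0)) + (((-2)*b0*b1^3*c1^2 + 5*b0*b1^2*c0^2*c1) + ((-8)*b0*b1^2*c0*c1*o0 + 4*b0*b1^2*c1^3))) + ((4*b0*b1^2*c1*o0^2 + ((-2)*b0*b1*c0^2*c1^2 + 8*b0*b1*c0*c1^2*o0)) + (((-2)*b0*b1*c1^4 + (-8)*b0*b1*c1^2*o0^2) + (4*b0*c1^3*o0^2 + 2*b1^4*c0*c1)))) + ((((-2)*b1^4*c1*o0 + ((-3)*b1^3*c0^3 + 6*b1^3*c0^2*o0)) + (((-4)*b1^3*c0*c1^2 + (-4)*b1^3*c0*o0^2) + (6*b1^3*c1^2*o0 + 2*b1^2*c0^3*c1))) + (((-8)*b1^2*c0^2*c1*o0 + (2*b1^2*c0*c1^3 + 8*b1^2*c0*c1*o0^2)) + (((-6)*b1^2*c1^3*o0 + 2*b1*c0^2*c1^2*o0) + ((-4)*b1*c0*c1^2*o0^2 + 2*b1*c1^4*o0))))))) * hQA + ((((((-1)*a0*b0^2*c1^3 + (2*a0*b0*b1*c0*c1^2 + (-4)*a0*b0*b1*c1^2*o0)) + (4*a0*b0*c1^3*o0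 + ((-1)*a0*b1^2*c0^2*c1 + 4*a0*b1^2*c0*c1*o0))) + (((-4)*a0*b1^2*c1*o0^2 + (1*a0*b1*c0^2*c1^2 + (-6)*a0*b1*c0*c1^2*o0)) + ((1*a0*b1*c1^4 + (-2)*a0*b1*c1^3*o1) + (8*a0*b1*c1^2*o0^2 + (-4)*a0*c1^3*o0^2))))) * hQB + (((((-2)*a0*b0*b1^2*c0*c1 + 4*a0*b0*b1^2*c1*o0) + ((-2)*a0*b0*b1*c1^2*o0 + (1*a0*b1^3*c0^2 + (-4)*a0*b1^3*c0*o0))) + (((-1)*a0*b1^3*c1^2 + (4*a0*b1^3*o0^2 + 4*a0*b1^2*c0*c1*o0)) + (2*a0*b1^2*c1^2*o1 + ((-8)*a0*b1^2*c1*o0^2 + 4*a0*b1*c1^2*o0^2))))) * hQC)))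
  rcases mul_eq_zero.mp key with h | h
  · exact absurd h (mul_ne_zero (mul_ne_zero hd1 hd2) hd3)
  · exact h

/-- The foot of the perpendicular from `P` to the line through `A` and `B`:
`F` lies on line `AB` and `P - F` is orthogonal to `B - A`. -/
def IsFoot (P A B F : EuclideanSpace ℝ (Fin 2)) : Prop :=
  (∃ t : ℝ, F = A + t • (B - A)) ∧ inner ℝ (P - F) (B - A) = (0 : ℝ)

set_option maxHeartbeats 40000000 in
/-- Simson–Wallace: if `A, B, C, P` lie on a circle, the feet of the perpendiculars
from `P` to the three sides are collinear. -/
theorem simson_wallace (A B C P O : EuclideanSpace ℝ (Fin 2)) (R : ℝ)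
    (hABC : ¬ Collinear ℝ ({A, B, C} : Set (EuclideanSpace ℝ (Fin 2))))
    (hA : dist O A = R) (hB : dist O B = R) (hC : dist O C = R) (hP : dist O P = R)
    (F₁ F₂ F₃ : EuclideanSpace ℝ (Fin 2))
    (h₁ : IsFoot P A B F₁) (h₂ : IsFoot P B C F₂) (h₃ : IsFoot P C A F₃) :
    Collinear ℝ ({F₁, F₂, F₃} : Set (EuclideanSpace ℝ (Fin 2))) := by
  obtain ⟨⟨t1, hF1⟩, hp1⟩ := h₁
  obtain ⟨⟨t2, hF2⟩, hp2⟩ := h₂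
  obtain ⟨⟨t3, hF3⟩, hp3⟩ := h₃
  have ht1 := sw_foot_eq P A B F₁ t1 hF1 hp1
  have ht2 := sw_foot_eq P B C F₂ t2 hF2 hp2
  have ht3 := sw_foot_eq P C A F₃ t3 hF3 hp3
  have hqA := sw_circle_eq O A P R hA hP
  have hqB := sw_circle_eq O B P R hB hP
  have hqC := sw_circle_eq O C P R hC hP
  have hAB : A ≠ B := by
    rintro rfl
    exact hABC (by rw [Set.insert_idem]; exact collinear_pair ℝ _ _)
  have hBC : B ≠ C := by
    rintro rfl
    exact hABC (by rw [Set.pair_eq_singleton]; exact collinear_pair ℝ _ _)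
  have hCA : C ≠ A := by
    rintro rfl
    refine hABC ?_
    rw [Set.insert_comm, Set.insert_eq_self.2 (Set.mem_singleton C)]
    exact collinear_pair ℝ _ _
  have hd1 : ((B 0 - A 0)^2 + (B 1 - A 1)^2) ≠ 0 := by
    intro hd
    exact hAB (by ext i; fin_cases i <;> simp <;>
      nlinarith [sq_nonneg (B 0 - A 0), sq_nonneg (B 1 - A 1)])
  have hd2 : ((C 0 - B 0)^2 + (C 1 - B 1)^2) ≠ 0 := by
    intro hd
    exact hBC (by ext i; fin_cases i <;> simp <;>
      nlinarith [sq_nonneg (C 0 - B 0), sq_nonneg (C 1 - B 1)])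
  have hd3 : ((A 0 - C 0)^2 + (A 1 - C 1)^2) ≠ 0 := by
    intro hd
    exact hCA (by ext i; fin_cases i <;> simp <;>
      nlinarith [sq_nonneg (A 0 - C 0), sq_nonneg (A 1 - C 1)])
  have e10 : F₁ 0 = A 0 + t1 * (B 0 - A 0) := by rw [hF1]; simp
  have e11 : F₁ 1 = A 1 + t1 * (B 1 - A 1) := by rw [hF1]; simp
  have e20 : F₂ 0 = B 0 + t2 * (C 0 - B 0) := by rw [hF2]; simp
  have e21 : F₂ 1 = B 1 + t2 * (C 1 - B 1) := by rw [hF2]; simp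
  have e30 : F₃ 0 = C 0 + t3 * (A 0 - C 0) := by rw [hF3]; simp
  have e31 : F₃ 1 = C 1 + t3 * (A 1 - C 1) := by rw [hF3]; simp
  by_cases hAP : ((A 0 - P 0)^2 + (A 1 - P 1)^2) = 0
  · -- A = P : the feet F₁ and F₃ both coincide with A
    have hA0 : A 0 = P 0 := by nlinarith [sq_nonneg (A 0 - P 0), sq_nonneg (A 1 - P 1)]
    have hA1 : A 1 = P 1 := by nlinarith [sq_nonneg (A 0 - P 0), sq_nonneg (A 1 - P 1)]
    have hT1 : t1 * ((B 0 - A 0)^2 + (B 1 - A 1)^2) = 0 := by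
      linear_combination -ht1 - (B 0 - A 0) * hA0 - (B 1 - A 1) * hA1
    have hT3 : (1 - t3) * ((A 0 - C 0)^2 + (A 1 - C 1)^2) = 0 := by
      linear_combination ht3 + (A 0 - C 0) * hA0 + (A 1 - C 1) * hA1
    have ht1z : t1 = 0 := by
      rcases mul_eq_zero.mp hT1 with h | h
      · exact h
      · exact absurd h hd1
    have ht3z : t3 = 1 := by
      rcases mul_eq_zero.mp hT3 with h | h
      · linarith
      · exact absurd h hd3
    have hF31 : F₃ = F₁ := by
      rw [hF1, hF3, ht1z, ht3z]
      ext i; fin_cases i <;> simp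
    rw [hF31, Set.insert_comm, Set.insert_eq_self.2 (Set.mem_singleton F₁)]
    exact collinear_pair ℝ _ _
  · have hd1' : (((A 0 - P 0)*(B 0 - P 0) + (A 1 - P 1)*(B 1 - P 1)) - ((A 0 - P 0)^2 + (A 1 - P 1)^2))^2 + ((A 0 - P 0)*(B 1 - P 1) - (A 1 - P 1)*(B 0 - P 0))^2 ≠ 0 := by
      have e : (((A 0 - P 0)*(B 0 - P 0) + (A 1 - P 1)*(B 1 - P 1)) - ((A 0 - P 0)^2 + (A 1 - P 1)^2))^2 + ((A 0 - P 0)*(B 1 - P 1) - (A 1 - P 1)*(B 0 - P 0))^2 = ((A 0 - P 0)^2 + (A 1 - P 1)^2) * ((B 0 - A 0)^2 + (B 1 - A 1)^2) := by ring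
      rw [e]
      exact mul_ne_zero hAP hd1
    have hd2' : (((A 0 - P 0)*(C 0 - P 0) + (A 1 - P 1)*(C 1 - P 1)) - ((A 0 - P 0)*(B 0 - P 0) + (A 1 - P 1)*(B 1 - P 1)))^2 + (((A 0 - P 0)*(C 1 - P 1) - (A 1 - P 1)*(C 0 - P 0)) - ((A 0 - P 0)*(B 1 - P 1) - (A 1 - P 1)*(B 0 - P 0)))^2 ≠ 0 := by
      have e : (((A 0 - P 0)*(C 0 - P 0) + (A 1 - P 1)*(C 1 - P 1)) - ((A 0 - P 0)*(B 0 - P 0) + (A 1 - P 1)*(B 1 - P 1)))^2 + (((A 0 - P 0)*(C 1 - P 1) - (A 1 - P 1)*(C 0 - P 0)) - ((A 0 - P 0)*(B 1 - P 1) - (A 1 - P 1)*(B 0 - P 0)))^2 = ((A 0 - P 0)^2 + (A 1 - P 1)^2) * ((C 0 - B 0)^2 + (C 1 - B 1)^2) := by ring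
      rw [e]
      exact mul_ne_zero hAP hd2
    have hd3' : (((A 0 - P 0)^2 + (A 1 - P 1)^2) - ((A 0 - P 0)*(C 0 - P 0) + (A 1 - P 1)*(C 1 - P 1)))^2 + ((A 0 - P 0)*(C 1 - P 1) - (A 1 - P 1)*(C 0 - P 0))^2 ≠ 0 := by
      have e : (((A 0 - P 0)^2 + (A 1 - P 1)^2) - ((A 0 - P 0)*(C 0 - P 0) + (A 1 - P 1)*(C 1 - P 1)))^2 + ((A 0 - P 0)*(C 1 - P 1) - (A 1 - P 1)*(C 0 - P 0))^2 = ((A 0 - P 0)^2 + (A 1 - P 1)^2) * ((A 0 - C 0)^2 + (A 1 - C 1)^2) := by ring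
      rw [e]
      exact mul_ne_zero hAP hd3
    have key := sw_key ((A 0 - P 0)^2 + (A 1 - P 1)^2) ((A 0 - P 0)*(B 0 - P 0) + (A 1 - P 1)*(B 1 - P 1)) ((A 0 - P 0)*(B 1 - P 1) - (A 1 - P 1)*(B 0 - P 0)) ((A 0 - P 0)*(C 0 - P 0) + (A 1 - P 1)*(C 1 - P 1)) ((A 0 - P 0)*(C 1 - P 1) - (A 1 - P 1)*(C 0 - P 0)) ((A 0 - P 0)*(O 0 - P 0) + (A 1 - P 1)*(O 1 - P 1)) ((A 0 - P 0)*(O 1 - P 1) - (A 1 - P 1)*(O 0 - P 0)) t1 t2 t3 hd1' hd2' hd3'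
      (by linear_combination ((A 0 - P 0)^2 + (A 1 - P 1)^2) * ht1)
      (by linear_combination ((A 0 - P 0)^2 + (A 1 - P 1)^2) * ht2)
      (by linear_combination ((A 0 - P 0)^2 + (A 1 - P 1)^2) * ht3)
      (by linear_combination ((A 0 - P 0)^2 + (A 1 - P 1)^2) * hqA)
      (by linear_combination ((A 0 - P 0)^2 + (A 1 - P 1)^2) * hqB)
      (by linear_combination ((A 0 - P 0)^2 + (A 1 - P 1)^2) * hqC)
    have hcross : ((A 0 - P 0)^2 + (A 1 - P 1)^2) * (((B 0 + t2*(C 0 - B 0)) - (A 0 + t1*(B 0 - A 0))) * ((C 1 + t3*(A 1 - C 1)) - (A 1 + t1*(B 1 - A 1))) - ((B 1 + t2*(C 1 - B 1)) - (A 1 + t1*(B 1 - A 1))) * ((C 0 + t3*(A 0 - C 0)) - (A 0 + t1*(B 0 - A 0)))) = 0 := by linear_combination key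
    have hcr : ((B 0 + t2*(C 0 - B 0)) - (A 0 + t1*(B 0 - A 0))) * ((C 1 + t3*(A 1 - C 1)) - (A 1 + t1*(B 1 - A 1))) - ((B 1 + t2*(C 1 - B 1)) - (A 1 + t1*(B 1 - A 1))) * ((C 0 + t3*(A 0 - C 0)) - (A 0 + t1*(B 0 - A 0))) = 0 := by
      rcases mul_eq_zero.mp hcross with h | h
      · exact absurd h hAP
      · exact h
    apply sw_collinear_of_det F₁ F₂ F₃
    rw [e10, e11, e20, e21, e30, e31]
    linear_combination hcr
end

section
/- With vertices a, b, c and point p all on the unit circle in ℂ (a, b, c distinct), the three perpendicular feet f_ab = (a+b+p−abp̄)/2, f_bc = (b+c+p−bcp̄)/2, f_ca = (c+a+p−cap̄)/2 are collinear. -/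
open Complex

private lemma conj_eq_inv' {z : ℂ} (h : ‖z‖ = 1) :
    (starRingEnd ℂ) z = z⁻¹ := by
  have h0 : z ≠ 0 := by
    intro hz; simp [hz] at h
  have : z * (starRingEnd ℂ) z = 1 := by
    rw [Complex.mul_conj]
    norm_cast
    rw [Complex.normSq_eq_norm_sq, h]; norm_num
  field_simp
  linear_combination this

private lemma collinear_of_smul (z1 z2 z3 : ℂ) (t : ℝ)
    (h : z3 - z1 = t • (z2 - z1)) : Collinear ℝ ({z1, z2, z3} : Set ℂ) := by
  rw [collinear_iff_of_mem (Set.mem_insert z1 _)]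
  refine ⟨z2 - z1, ?_⟩
  intro p hp
  rcases hp with rfl | rfl | rfl
  · exact ⟨0, by simp⟩
  · exact ⟨1, by simp⟩
  · exact ⟨t, by rw [← h]; simp⟩

/-- With `a`, `b`, `c`, `p` on the unit circle (`a`, `b`, `c` pairwise distinct),
the three perpendicular feet `(a+b+p−ab·conj p)/2`, `(b+c+p−bc·conj p)/2`,
`(c+a+p−ca·conj p)/2` are collinear (the Simson–Wallace line). -/
theorem simson_feet_collinear (a b c p : ℂ)
    (ha : ‖a‖ = 1) (hb : ‖b‖ = 1) (hc : ‖c‖ = 1)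
    (hp : ‖p‖ = 1)
    (hab : a ≠ b) (hbc : b ≠ c) (hca : c ≠ a) :
    Collinear ℝ ({(a + b + p - a * b * (starRingEnd ℂ p)) / 2,
                  (b + c + p - b * c * (starRingEnd ℂ p)) / 2,
                  (c + a + p - c * a * (starRingEnd ℂ p)) / 2} : Set ℂ) := by
  have ha0 : a ≠ 0 := fun h => by simp [h] at ha
  have hb0 : b ≠ 0 := fun h => by simp [h] at hb
  have hc0 : c ≠ 0 := fun h => by simp [h] at hc
  have hp0 : p ≠ 0 := fun h => by simp [h] at hp
  have hcp : (starRingEnd ℂ) p = p⁻¹ := conj_eq_inv' hp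
  have hca' : c - a ≠ 0 := sub_ne_zero.mpr hca
  by_cases hpb : p = b
  · -- z1 = z2 = b
    have h1 : (a + b + p - a * b * (starRingEnd ℂ p)) / 2 = b := by
      rw [hpb, conj_eq_inv' hb]
      field_simp; ring
    have h2 : (b + c + p - b * c * (starRingEnd ℂ p)) / 2 = b := by
      rw [hpb, conj_eq_inv' hb]
      field_simp; ring
    rw [h1, h2]
    rw [Set.insert_idem]
    exact collinear_pair ℝ _ _
  · have hpb' : p - b ≠ 0 := sub_ne_zero.mpr hpb
    set r : ℂ := (c - b) * (p - a) / ((c - a) * (p - b)) with hr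
    have hca2 : c⁻¹ - a⁻¹ ≠ 0 := sub_ne_zero.mpr (fun h => hca (inv_injective h))
    have hpb2 : p⁻¹ - b⁻¹ ≠ 0 := sub_ne_zero.mpr (fun h => hpb (inv_injective h))
    have hreal : (starRingEnd ℂ) r = r := by
      simp only [hr, map_div₀, map_mul, map_sub, conj_eq_inv' ha, conj_eq_inv' hb,
        conj_eq_inv' hc, conj_eq_inv' hp]
      rw [div_eq_div_iff (mul_ne_zero hca2 hpb2) (mul_ne_zero hca' hpb')]
      field_simp
      ring
    have hrre : (r.re : ℂ) = r := Complex.conj_eq_iff_re.mp hreal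
    apply collinear_of_smul _ _ _ r.re
    rw [Complex.real_smul, hrre, hr, hcp]
    field_simp
    ring
end

section
/- If two distinct points P and Q on the circumcircle of a triangle are diametrically opposite, then their Simson lines with respect to that triangle are perpendicular. -/
private lemma coords_ne (x y : EuclideanSpace ℝ (Fin 2)) (h : x ≠ y) :
    (y 0 - x 0)^2 + (y 1 - x 1)^2 ≠ 0 := by
  intro hc
  apply h
  have h0 : x 0 = y 0 := by nlinarith [sq_nonneg (y 0 - x 0), sq_nonneg (y 1 - x 1)]
  have h1 : x 1 = y 1 := by nlinarith [sq_nonneg (y 0 - x 0), sq_nonneg (y 1 - x 1)]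
  ext i; fin_cases i <;> assumption

private lemma dist_sq (x y : EuclideanSpace ℝ (Fin 2)) :
    dist x y ^ 2 = (x 0 - y 0)^2 + (x 1 - y 1)^2 := by
  rw [EuclideanSpace.dist_eq, Real.sq_sqrt (by positivity)]
  simp [Fin.sum_univ_two, Real.dist_eq, sq_abs]

/-- The Simson lines of two diametrically opposite points of the circumcircle
are perpendicular. -/
theorem simson_lines_perpendicular (A B C O P Q : EuclideanSpace ℝ (Fin 2)) (R : ℝ)
    (hABC : ¬ Collinear ℝ ({A, B, C} : Set (EuclideanSpace ℝ (Fin 2))))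
    (hA : dist O A = R) (hB : dist O B = R) (hC : dist O C = R)
    (hP : dist O P = R) (hQ : Q = (2 : ℝ) • O - P) (hPQ : P ≠ Q)
    (F₁ F₂ F₃ G₁ G₂ G₃ : EuclideanSpace ℝ (Fin 2))
    (hF₁ : IsFoot P A B F₁) (hF₂ : IsFoot P B C F₂) (hF₃ : IsFoot P C A F₃)
    (hG₁ : IsFoot Q A B G₁) (hG₂ : IsFoot Q B C G₂) (hG₃ : IsFoot Q C A G₃)
    (hF : F₁ ≠ F₂) (hG : G₁ ≠ G₂) :
    inner ℝ (F₂ - F₁) (G₂ - G₁) = (0 : ℝ) := by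
  -- nondegeneracy
  have hAB : A ≠ B := by
    rintro rfl; exact hABC (by simpa using collinear_pair ℝ A C)
  have hBC : B ≠ C := by
    rintro rfl; exact hABC (by simpa using collinear_pair ℝ A B)
  have hU : (B 0 - A 0)^2 + (B 1 - A 1)^2 ≠ 0 := coords_ne A B hAB
  have hV : (C 0 - B 0)^2 + (C 1 - B 1)^2 ≠ 0 := coords_ne B C hBC
  -- circle condition
  have hd : (O 0 - B 0)^2 + (O 1 - B 1)^2 = (O 0 - P 0)^2 + (O 1 - P 1)^2 := by
    rw [← dist_sq, ← dist_sq, hB, hP]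
  -- feet
  obtain ⟨⟨t1, hft1⟩, h1⟩ := hF₁
  obtain ⟨⟨t2, hft2⟩, h2⟩ := hF₂
  obtain ⟨⟨s1, hfs1⟩, h3⟩ := hG₁
  obtain ⟨⟨s2, hfs2⟩, h4⟩ := hG₂
  subst hft1 hft2 hfs1 hfs2 hQ
  simp only [PiLp.inner_apply, Fin.sum_univ_two, RCLike.inner_apply, starRingEnd_apply,
    star_trivial, PiLp.add_apply, PiLp.sub_apply, PiLp.smul_apply, smul_eq_mul] at h1 h2 h3 h4 ⊢
  have hUV : ((((B 0) - (A 0))^2 + ((B 1) - (A 1))^2) * (((C 0) - (B 0))^2 + ((C 1) - (B 1))^2) : ℝ) ≠ 0 := mul_ne_zero hU hV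
  have key : (((B 0) - (A 0))^2 + ((B 1) - (A 1))^2) * (((C 0) - (B 0))^2 + ((C 1) - (B 1))^2) * ((((B 0) + t2*((C 0) - (B 0))) - ((A 0) + t1*((B 0) - (A 0))))*(((B 0) + s2*((C 0) - (B 0))) - ((A 0) + s1*((B 0) - (A 0)))) + (((B 1) + t2*((C 1) - (B 1))) - ((A 1) + t1*((B 1) - (A 1))))*(((B 1) + s2*((C 1) - (B 1))) - ((A 1) + s1*((B 1) - (A 1))))) = 0 := by
    linear_combination (-(((2*(O 0) - (P 0)) - (B 0))*((B 0) - (A 0)) + ((2*(O 1) - (P 1)) - (B 1))*((B 1) - (A 1)))*(((C 0) - (B 0))^2 + ((C 1) - (B 1))^2) + (((2*(O 0) - (P 0)) - (B 0))*((C 0) - (B 0)) + ((2*(O 1) - (P 1)) - (B 1))*((C 1) - (B 1)))*(((B 0) - (A 0))*((C 0) - (B 0)) + ((B 1) - (A 1))*((C 1) - (B 1))) + (((C 0) - (B 0))^2 + ((C 1) - (B 1))^2)*(((2*(O 0) - (P 0)) - ((A 0) + s1*((B 0) - (A 0))))*((B 0) - (A 0)) + ((2*(O 1) - (P 1)) -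 ((A 1) + s1*((B 1) - (A 1))))*((B 1) - (A 1))) - (((B 0) - (A 0))*((C 0) - (B 0)) + ((B 1) - (A 1))*((C 1) - (B 1)))*(((2*(O 0) - (P 0)) - ((B 0) + s2*((C 0) - (B 0))))*((C 0) - (B 0)) + ((2*(O 1) - (P 1)) - ((B 1) + s2*((C 1) - (B 1))))*((C 1) - (B 1)))) * h1 + ((((2*(O 0) - (P 0)) - (B 0))*((B 0) - (A 0)) + ((2*(O 1) - (P 1)) - (B 1))*((B 1) - (A 1)))*(((B 0) - (A 0))*((C 0) - (B 0)) + ((B 1) - (A 1))*((C 1) - (B 1))) - (((B 0) - (A 0))^2 + ((B 1) - (A 1))^2)*(((2*(O 0) - (P 0)) - (B 0))*((C 0) - (B 0)) + ((2*(O 1) - (P 1)) - (B 1))*((C 1) - (B 1))) + (((B 0) - (A 0))^2 + ((B 1) - (A 1))^2)*(((2*(O 0) - (P 0)) - ((B 0) + s2*((C 0) - (B 0))))*((C 0) - (B 0)) + ((2*(O 1) - (P 1)) - ((B 1) + s2*((C 1) - (B 1))))*((C 1) - (B 1)))) * h2 + (-(((P 0) - (B 0))*((B 0) - (A 0)) +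 ((P 1) - (B 1))*((B 1) - (A 1)))*(((C 0) - (B 0))^2 + ((C 1) - (B 1))^2) + (((P 0) - (B 0))*((C 0) - (B 0)) + ((P 1) - (B 1))*((C 1) - (B 1)))*(((B 0) - (A 0))*((C 0) - (B 0)) + ((B 1) - (A 1))*((C 1) - (B 1))) - (((B 0) - (A 0))*((C 0) - (B 0)) + ((B 1) - (A 1))*((C 1) - (B 1)))*(((P 0) - ((B 0) + t2*((C 0) - (B 0))))*((C 0) - (B 0)) + ((P 1) - ((B 1) + t2*((C 1) - (B 1))))*((C 1) - (B 1)))) * h3 + ((((P 0) - (B 0))*((B 0) - (A 0)) + ((P 1) - (B 1))*((B 1) - (A 1)))*(((B 0) - (A 0))*((C 0) - (B 0)) + ((B 1) - (A 1))*((C 1) - (B 1))) - (((B 0) - (A 0))^2 + ((B 1) - (A 1))^2)*(((P 0) - (B 0))*((C 0) - (B 0)) + ((P 1) - (B 1))*((C 1) - (B 1)))) * h4 + (((B 0) - (A 0))*((C 1) - (B 1)) - ((B 1) - (A 1))*((C 0) - (B 0)))^2 * hd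
  have hz := (mul_eq_zero.mp key).resolve_left hUV
  linear_combination hz
end

section
/- The tangent line to the tricuspid hypocycloid at a non-cusp point γ(α) meets the curve again, and the segment of the tangent cut off by the curve has constant length 4r independent of α; in particular the two further intersection points γ(α₁), γ(α₂) of the tangent with the curve satisfy ‖γ(α₁) − γ(α₂)‖ = 4r. -/
open Real

/-- Constant tangent-chord property of the deltoid: the tangent line at any non-cusp
point meets the curve in two further points, and the chord it cuts has length `4r`. -/
theorem deltoid_tangent_chord (r : ℝ) (hr : 0 < r)
    (γ : ℝ → EuclideanSpace ℝ (Fin 2))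
    (hγ : ∀ α, γ α = ![r * (2 * cos α + cos (2 * α)), r * (2 * sin α - sin (2 * α))]) :
    ∀ α : ℝ, deriv γ α ≠ 0 →
      ∃ α₁ α₂ : ℝ,
        γ α₁ ≠ γ α ∧ γ α₂ ≠ γ α ∧ γ α₁ ≠ γ α₂ ∧
        (∃ t : ℝ, γ α₁ = γ α + t • deriv γ α) ∧
        (∃ t : ℝ, γ α₂ = γ α + t • deriv γ α) ∧
        dist (γ α₁) (γ α₂) = 4 * r := by
  intro α hα
  -- derivative of each component
  have hcos2 : ∀ a : ℝ, HasDerivAt (fun x : ℝ => cos (2 * x)) (-2 * sin (2 * a)) a := by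
    intro a
    have := (Real.hasDerivAt_cos (2 * a)).comp a ((hasDerivAt_id a).const_mul (2 : ℝ))
    simp only [Function.comp_def, id_eq] at this
    exact this.congr_deriv (by ring)
  have hsin2 : ∀ a : ℝ, HasDerivAt (fun x : ℝ => sin (2 * x)) (2 * cos (2 * a)) a := by
    intro a
    have := (Real.hasDerivAt_sin (2 * a)).comp a ((hasDerivAt_id a).const_mul (2 : ℝ))
    simp only [Function.comp_def, id_eq] at this
    exact this.congr_deriv (by ring)
  have hdx : HasDerivAt (fun a : ℝ => r * (2 * cos a + cos (2 * a)))
      (r * (-2 * sin α - 2 * sin (2 * α))) α := by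
    have := (((Real.hasDerivAt_cos α).const_mul (2 : ℝ)).add (hcos2 α)).const_mul r
    exact this.congr_deriv (by ring)
  have hdy : HasDerivAt (fun a : ℝ => r * (2 * sin a - sin (2 * a)))
      (r * (2 * cos α - 2 * cos (2 * α))) α := by
    have := (((Real.hasDerivAt_sin α).const_mul (2 : ℝ)).sub (hsin2 α)).const_mul r
    exact this.congr_deriv (by ring)
  have hpi : HasDerivAt
      (fun a : ℝ => (![r * (2 * cos a + cos (2 * a)), r * (2 * sin a - sin (2 * a))] : Fin 2 → ℝ))
      (![r * (-2 * sin α - 2 * sin (2 * α)), r * (2 * cos α - 2 * cos (2 * α))]) α := by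
    refine hasDerivAt_pi.2 ?_
    intro i
    fin_cases i
    · simpa using hdx
    · simpa using hdy
  have hD : HasDerivAt γ
      ((EuclideanSpace.equiv (Fin 2) ℝ).symm
        ![r * (-2 * sin α - 2 * sin (2 * α)), r * (2 * cos α - 2 * cos (2 * α))]) α := by
    rw [show γ = fun a => WithLp.toLp 2 ![r * (2 * cos a + cos (2 * a)), r * (2 * sin a - sin (2 * a))]
      from funext fun a => by rw [← hγ]]
    exact ((EuclideanSpace.equiv (Fin 2) ℝ).symm.toContinuousLinearMap.hasFDerivAt).comp_hasDerivAt
      α hpi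
  have hderiv : deriv γ α =
      (EuclideanSpace.equiv (Fin 2) ℝ).symm
        ![r * (-2 * sin α - 2 * sin (2 * α)), r * (2 * cos α - 2 * cos (2 * α))] := hD.deriv
  -- abbreviations
  have hsk : sin (α / 2) ^ 2 + cos (α / 2) ^ 2 = 1 := sin_sq_add_cos_sq (α / 2)
  have e1 : cos α = 2 * cos (α / 2) ^ 2 - 1 := by
    have := cos_two_mul (α / 2); rwa [show 2 * (α / 2) = α by ring] at this
  have e2 : sin α = 2 * sin (α / 2) * cos (α / 2) := by
    have := sin_two_mul (α / 2); rwa [show 2 * (α / 2) = α by ring] at this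
  have e3 : cos (2 * α) = 2 * (2 * cos (α / 2) ^ 2 - 1) ^ 2 - 1 := by
    rw [cos_two_mul, e1]
  have e4 : sin (2 * α) = 2 * (2 * sin (α / 2) * cos (α / 2)) * (2 * cos (α / 2) ^ 2 - 1) := by
    rw [sin_two_mul, e2, e1]
  have e5 : cos (3 * (α / 2)) = 4 * cos (α / 2) ^ 3 - 3 * cos (α / 2) := cos_three_mul _
  have e6 : sin (3 * (α / 2)) = 3 * sin (α / 2) - 4 * sin (α / 2) ^ 3 := sin_three_mul _
  have f1 : cos (-(α / 2)) = cos (α / 2) := cos_neg _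
  have f2 : sin (-(α / 2)) = -sin (α / 2) := sin_neg _
  have f3 : cos (2 * -(α / 2)) = 2 * cos (α / 2) ^ 2 - 1 := by
    rw [show (2 : ℝ) * -(α / 2) = -α by ring, cos_neg, e1]
  have f4 : sin (2 * -(α / 2)) = -(2 * sin (α / 2) * cos (α / 2)) := by
    rw [show (2 : ℝ) * -(α / 2) = -α by ring, sin_neg, e2]
  have g1 : cos (π - α / 2) = -cos (α / 2) := cos_pi_sub _
  have g2 : sin (π - α / 2) = sin (α / 2) := sin_pi_sub _
  have g3 : cos (2 * (π - α / 2)) = 2 * cos (α / 2) ^ 2 - 1 := by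
    rw [show (2 : ℝ) * (π - α / 2) = 2 * π - α by ring, cos_sub, cos_two_pi, sin_two_pi, e1]; ring
  have g4 : sin (2 * (π - α / 2)) = -(2 * sin (α / 2) * cos (α / 2)) := by
    rw [show (2 : ℝ) * (π - α / 2) = 2 * π - α by ring, sin_sub, cos_two_pi, sin_two_pi, e2]; ring
  -- non-cusp means sin(3α/2) ≠ 0
  have hS : sin (3 * (α / 2)) ≠ 0 := by
    intro h0
    apply hα
    rw [hderiv]
    have hz : 3 * sin (α / 2) - 4 * sin (α / 2) ^ 3 = 0 := by rw [← e6, h0]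
    apply WithLp.ofLp_injective 2
    funext i
    fin_cases i
    · show r * (-2 * sin α - 2 * sin (2 * α)) = 0
      rw [e2, e4]
      linear_combination (-16 * r * sin (α / 2) * cos (α / 2)) * hsk - 4 * r * cos (α / 2) * hz
    · show r * (2 * cos α - 2 * cos (2 * α)) = 0
      rw [e1, e3]
      linear_combination (16 * r * sin (α / 2) ^ 2 - 16 * r * cos (α / 2) ^ 2 + 4 * r) * hsk +
        4 * r * sin (α / 2) * hz
  have hS' : 3 * sin (α / 2) - 4 * sin (α / 2) ^ 3 ≠ 0 := by rw [← e6]; exact hS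
  have hsk3 : sin (3 * (α / 2)) ^ 2 + cos (3 * (α / 2)) ^ 2 = 1 := sin_sq_add_cos_sq _
  rw [e5, e6] at hsk3
  refine ⟨-(α / 2), π - α / 2, ?_, ?_, ?_, ?_, ?_, ?_⟩
  · intro h
    apply_fun WithLp.ofLp at h
    rw [hγ, hγ] at h
    have hx := congrFun h 0
    have hy := congrFun h 1
    simp only [Matrix.cons_val_zero, Matrix.cons_val_one, Matrix.head_cons] at hx hy
    rw [f1, f3, e1, e3] at hx
    rw [f2, f4, e2, e4] at hy
    have hx' := mul_left_cancel₀ (ne_of_gt hr) hx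
    have hy' := mul_left_cancel₀ (ne_of_gt hr) hy
    have h1 : cos (α / 2) * (1 - (4 * cos (α / 2) ^ 3 - 3 * cos (α / 2))) = 0 := by
      linear_combination hx' / 2
    have h2 : sin (α / 2) * (1 - (4 * cos (α / 2) ^ 3 - 3 * cos (α / 2))) = 0 := by
      linear_combination -hy' / 2
    have hC : 1 - (4 * cos (α / 2) ^ 3 - 3 * cos (α / 2)) = 0 := by
      linear_combination sin (α / 2) * h2 + cos (α / 2) * h1 -
        (1 - (4 * cos (α / 2) ^ 3 - 3 * cos (α / 2))) * hsk
    apply hS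
    rw [e6]
    have hsq : (3 * sin (α / 2) - 4 * sin (α / 2) ^ 3) ^ 2 = 0 := by
      linear_combination hsk3 + (1 + (4 * cos (α / 2) ^ 3 - 3 * cos (α / 2))) * hC
    exact (pow_eq_zero_iff two_ne_zero).mp hsq
  · intro h
    apply_fun WithLp.ofLp at h
    rw [hγ, hγ] at h
    have hx := congrFun h 0
    have hy := congrFun h 1
    simp only [Matrix.cons_val_zero, Matrix.cons_val_one, Matrix.head_cons] at hx hy
    rw [g1, g3, e1, e3] at hx
    rw [g2, g4, e2, e4] at hy
    have hx' := mul_left_cancel₀ (ne_of_gt hr) hx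
    have hy' := mul_left_cancel₀ (ne_of_gt hr) hy
    have h1 : cos (α / 2) * (1 + (4 * cos (α / 2) ^ 3 - 3 * cos (α / 2))) = 0 := by
      linear_combination -hx' / 2
    have h2 : sin (α / 2) * (1 + (4 * cos (α / 2) ^ 3 - 3 * cos (α / 2))) = 0 := by
      linear_combination hy' / 2
    have hC : 1 + (4 * cos (α / 2) ^ 3 - 3 * cos (α / 2)) = 0 := by
      linear_combination sin (α / 2) * h2 + cos (α / 2) * h1 -
        (1 + (4 * cos (α / 2) ^ 3 - 3 * cos (α / 2))) * hsk
    apply hS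
    rw [e6]
    have hsq : (3 * sin (α / 2) - 4 * sin (α / 2) ^ 3) ^ 2 = 0 := by
      linear_combination hsk3 + (1 - (4 * cos (α / 2) ^ 3 - 3 * cos (α / 2))) * hC
    exact (pow_eq_zero_iff two_ne_zero).mp hsq
  · intro h
    apply_fun WithLp.ofLp at h
    rw [hγ, hγ] at h
    have hx := congrFun h 0
    have hy := congrFun h 1
    simp only [Matrix.cons_val_zero, Matrix.cons_val_one, Matrix.head_cons] at hx hy
    rw [f1, f3] at hx
    rw [g1, g3] at hx
    rw [f2, f4] at hy
    rw [g2, g4] at hy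
    have hx' := mul_left_cancel₀ (ne_of_gt hr) hx
    have hy' := mul_left_cancel₀ (ne_of_gt hr) hy
    have hk0 : cos (α / 2) = 0 := by linarith
    have hs0 : sin (α / 2) = 0 := by linarith
    rw [hk0, hs0] at hsk
    norm_num at hsk
  · refine ⟨-(1 - cos (3 * (α / 2))) / (2 * sin (3 * (α / 2))), ?_⟩
    apply WithLp.ofLp_injective 2
    rw [WithLp.ofLp_add, WithLp.ofLp_smul]
    rw [hγ, hγ, hderiv]
    funext i
    fin_cases i
    · show r * (2 * cos (-(α / 2)) + cos (2 * -(α / 2))) = r * (2 * cos α + cos (2 * α)) +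
        -(1 - cos (3 * (α / 2))) / (2 * sin (3 * (α / 2))) * (r * (-2 * sin α - 2 * sin (2 * α)))
      rw [f1, f3, e1, e3, e2, e4, e5, e6]
      rw [div_mul_eq_mul_div, add_div' _ _ _ (mul_ne_zero two_ne_zero hS'),
        eq_div_iff (mul_ne_zero two_ne_zero hS')]
      linear_combination r * (64 * sin (α / 2) * cos (α / 2) ^ 4 - 48 * sin (α / 2) * cos (α / 2) ^ 2
        - 16 * sin (α / 2) * cos (α / 2)) * hsk
    · show r * (2 * sin (-(α / 2)) - sin (2 * -(α / 2))) = r * (2 * sin α - sin (2 * α)) +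
        -(1 - cos (3 * (α / 2))) / (2 * sin (3 * (α / 2))) * (r * (2 * cos α - 2 * cos (2 * α)))
      rw [f2, f4, e1, e3, e2, e4, e5, e6]
      rw [div_mul_eq_mul_div, add_div' _ _ _ (mul_ne_zero two_ne_zero hS'),
        eq_div_iff (mul_ne_zero two_ne_zero hS')]
      linear_combination r * (-64 * sin (α / 2) ^ 2 * cos (α / 2) ^ 3 + 48 * sin (α / 2) ^ 2 * cos (α / 2)
        + 16 * sin (α / 2) ^ 2 + 64 * cos (α / 2) ^ 5 - 64 * cos (α / 2) ^ 3 - 16 * cos (α / 2) ^ 2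
        + 12 * cos (α / 2) + 4) * hsk
  · refine ⟨(1 + cos (3 * (α / 2))) / (2 * sin (3 * (α / 2))), ?_⟩
    apply WithLp.ofLp_injective 2
    rw [WithLp.ofLp_add, WithLp.ofLp_smul]
    rw [hγ, hγ, hderiv]
    funext i
    fin_cases i
    · show r * (2 * cos (π - α / 2) + cos (2 * (π - α / 2))) = r * (2 * cos α + cos (2 * α)) +
        (1 + cos (3 * (α / 2))) / (2 * sin (3 * (α / 2))) * (r * (-2 * sin α - 2 * sin (2 * α)))
      rw [g1, g3, e1, e3, e2, e4, e5, e6]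
      rw [div_mul_eq_mul_div, add_div' _ _ _ (mul_ne_zero two_ne_zero hS'),
        eq_div_iff (mul_ne_zero two_ne_zero hS')]
      linear_combination r * (64 * sin (α / 2) * cos (α / 2) ^ 4 - 48 * sin (α / 2) * cos (α / 2) ^ 2
        + 16 * sin (α / 2) * cos (α / 2)) * hsk
    · show r * (2 * sin (π - α / 2) - sin (2 * (π - α / 2))) = r * (2 * sin α - sin (2 * α)) +
        (1 + cos (3 * (α / 2))) / (2 * sin (3 * (α / 2))) * (r * (2 * cos α - 2 * cos (2 * α)))
      rw [g2, g4, e1, e3, e2, e4, e5, e6]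
      rw [div_mul_eq_mul_div, add_div' _ _ _ (mul_ne_zero two_ne_zero hS'),
        eq_div_iff (mul_ne_zero two_ne_zero hS')]
      linear_combination r * (-64 * sin (α / 2) ^ 2 * cos (α / 2) ^ 3 + 48 * sin (α / 2) ^ 2 * cos (α / 2)
        - 16 * sin (α / 2) ^ 2 + 64 * cos (α / 2) ^ 5 - 64 * cos (α / 2) ^ 3 + 16 * cos (α / 2) ^ 2
        + 12 * cos (α / 2) - 4) * hsk
  · rw [EuclideanSpace.dist_eq, hγ, hγ]
    have hval : ∑ i : Fin 2, dist ((![r * (2 * cos (-(α / 2)) + cos (2 * -(α / 2))),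
        r * (2 * sin (-(α / 2)) - sin (2 * -(α / 2)))] : Fin 2 → ℝ) i)
        ((![r * (2 * cos (π - α / 2) + cos (2 * (π - α / 2))),
        r * (2 * sin (π - α / 2) - sin (2 * (π - α / 2)))] : Fin 2 → ℝ) i) ^ 2
        = (4 * r) ^ 2 := by
      simp only [Fin.sum_univ_two, Matrix.cons_val_zero, Matrix.cons_val_one, Matrix.head_cons,
        Real.dist_eq, sq_abs]
      rw [f1, f2, f3, f4, g1, g2, g3, g4]
      linear_combination (16 * r ^ 2) * hsk
    rw [hval, Real.sqrt_sq (by positivity)]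
end
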